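/- Let X be a finite set with exactly 6 elements and let g : X ≃ X be a fixed-point-free involution (g ∘ g = id, g ≠ id, and g(x) ≠ x for all x ∈ X). Consider the induced action of g on the set of perfect matchings of X (partitions of X into three two-element subsets). Then exactly 7 of the 15 perfect matchings of X are invariant under g, and the remaining 8 form 4 orbits of size 2. -/

import Mathlib

/-- `M` is a perfect matching of `X`: a partition of `X` into three two-element
subsets. -/
def IsPerfectMatching {X : Type*} [DecidableEq X] (M : Finset (Finset X)) : Prop :=
  M.card = 3 ∧ (∀ p ∈ M, p.card = 2) ∧ ∀ x : X, ∃! p, p ∈ M ∧ x ∈ p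

/-- The action of a permutation `g` of `X` on a perfect matching. -/
def matchingMap {X : Type*} [DecidableEq X] (g : Equiv.Perm X)
    (M : Finset (Finset X)) : Finset (Finset X) :=
  M.image fun p => p.image g

namespace FPFAux

/-- computable reformulation -/
def PM' {X : Type*} [DecidableEq X] [Fintype X] (M : Finset (Finset X)) : Prop :=
  M.card = 3 ∧ (∀ p ∈ M, p.card = 2) ∧ ∀ x : X, (M.filter (fun p => x ∈ p)).card = 1

instance {X : Type*} [DecidableEq X] [Fintype X] : DecidablePred (PM' (X := X)) :=
  fun _ => by unfold PM'; infer_instance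

theorem pm_iff {X : Type*} [DecidableEq X] [Fintype X] (M : Finset (Finset X)) :
    IsPerfectMatching M ↔ PM' M := by
  unfold IsPerfectMatching PM'
  refine and_congr Iff.rfl (and_congr Iff.rfl (forall_congr' fun x => ?_))
  rw [Finset.card_eq_one]
  constructor
  · rintro ⟨p, ⟨hp, hxp⟩, hu⟩
    refine ⟨p, ?_⟩
    ext q
    simp only [Finset.mem_filter, Finset.mem_singleton]
    constructor
    · rintro ⟨hq, hxq⟩; exact hu q ⟨hq, hxq⟩
    · rintro rfl; exact ⟨hp, hxp⟩
  · rintro ⟨a, ha⟩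
    have haM : a ∈ M.filter (fun p => x ∈ p) := ha ▸ Finset.mem_singleton_self a
    rw [Finset.mem_filter] at haM
    refine ⟨a, ⟨haM.1, haM.2⟩, ?_⟩
    rintro q ⟨hq, hxq⟩
    have : q ∈ M.filter (fun p => x ∈ p) := Finset.mem_filter.mpr ⟨hq, hxq⟩
    rw [ha, Finset.mem_singleton] at this
    exact this

theorem map_pm {X Y : Type*} [DecidableEq X] [DecidableEq Y] (f : X ≃ Y)
    {M : Finset (Finset X)} (h : IsPerfectMatching M) :
    IsPerfectMatching (M.image fun p => p.image f) := by
  obtain ⟨h3, h2, hu⟩ := h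
  have hinj : Function.Injective (fun p : Finset X => p.image ⇑f) :=
    Finset.image_injective f.injective
  refine ⟨?_, ?_, ?_⟩
  · rw [Finset.card_image_of_injective _ hinj, h3]
  · intro q hq
    rw [Finset.mem_image] at hq
    obtain ⟨p, hp, rfl⟩ := hq
    rw [Finset.card_image_of_injective _ f.injective]
    exact h2 p hp
  · intro y
    obtain ⟨p, ⟨hpM, hxp⟩, hpu⟩ := hu (f.symm y)
    refine ⟨p.image f, ⟨Finset.mem_image_of_mem _ hpM, ?_⟩, ?_⟩
    · rw [Finset.mem_image]
      exact ⟨f.symm y, hxp, f.apply_symm_apply y⟩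
    · rintro q ⟨hq, hyq⟩
      rw [Finset.mem_image] at hq
      obtain ⟨p', hp', rfl⟩ := hq
      rw [Finset.mem_image] at hyq
      obtain ⟨a, ha, hfa⟩ := hyq
      have : a = f.symm y := by rw [← hfa, f.symm_apply_apply]
      subst this
      rw [hpu p' ⟨hp', ha⟩]

/-- The induced equivalence on families of finsets. -/
def mEquiv {X Y : Type*} [DecidableEq X] [DecidableEq Y] (f : X ≃ Y) :
    Finset (Finset X) ≃ Finset (Finset Y) where
  toFun M := M.image fun p => p.image f
  invFun M := M.image fun p => p.image f.symm
  left_inv M := by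
    simp [Finset.image_image, Function.comp_def]
  right_inv M := by
    simp [Finset.image_image, Function.comp_def]

theorem pm_mEquiv_iff {X Y : Type*} [DecidableEq X] [DecidableEq Y] (f : X ≃ Y)
    (M : Finset (Finset X)) :
    IsPerfectMatching (mEquiv f M) ↔ IsPerfectMatching M := by
  constructor
  · intro h
    have h2 := map_pm f.symm h
    have h3 : ((mEquiv f M).image fun p => p.image f.symm) = M := (mEquiv f).left_inv M
    rwa [h3] at h2
  · exact map_pm f

theorem mm_natural {X Y : Type*} [DecidableEq X] [DecidableEq Y] (f : X ≃ Y)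
    (g : Equiv.Perm X) (c : Equiv.Perm Y) (hfc : ∀ x, f (g x) = c (f x))
    (M : Finset (Finset X)) :
    matchingMap c (mEquiv f M) = mEquiv f (matchingMap g M) := by
  simp only [matchingMap, mEquiv, Equiv.coe_fn_mk, Finset.image_image]
  congr 1
  funext p
  simp only [Function.comp_def, Finset.image_image]
  congr 1
  funext x
  exact (hfc x).symm

theorem mm_invol {X : Type*} [DecidableEq X] (g : Equiv.Perm X) (hg2 : g * g = 1)
    (M : Finset (Finset X)) : matchingMap g (matchingMap g M) = M := by
  have hgg : ∀ x, g (g x) = x := by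
    intro x
    have := congrArg (fun σ : Equiv.Perm X => σ x) hg2
    simpa [Equiv.Perm.mul_apply] using this
  have hfun : (⇑g ∘ ⇑g) = id := funext hgg
  simp [matchingMap, Finset.image_image, Function.comp_def, hgg]

def S6 : Finset (Finset (Finset (Fin 6))) :=
  (Finset.univ.powersetCard 2).powersetCard 3

def c0 : Equiv.Perm (Fin 6) := (Equiv.swap 0 1) * (Equiv.swap 2 3) * (Equiv.swap 4 5)

theorem pm_mem_S6 {M : Finset (Finset (Fin 6))} (h : IsPerfectMatching M) : M ∈ S6 := by
  obtain ⟨h3, h2, -⟩ := h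
  rw [S6, Finset.mem_powersetCard]
  refine ⟨fun p hp => ?_, h3⟩
  rw [Finset.mem_powersetCard]
  exact ⟨Finset.subset_univ p, h2 p hp⟩

theorem count_eq (Q : Finset (Finset (Fin 6)) → Prop) [DecidablePred Q]
    (hQ : ∀ M, Q M → M ∈ S6) :
    Nat.card {M : Finset (Finset (Fin 6)) // Q M} = (S6.filter Q).card := by
  have h0 : Nat.card {M : Finset (Finset (Fin 6)) // Q M} = Set.ncard {M | Q M} :=
    Nat.card_coe_set_eq _
  have h1 : {M | Q M} = ↑(S6.filter Q) := by
    ext M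
    simp only [Set.mem_setOf_eq, Finset.coe_filter, Set.mem_setOf_eq]
    exact ⟨fun h => ⟨hQ M h, h⟩, fun h => h.2⟩
  rw [h0, h1, Set.ncard_coe_finset]

set_option maxHeartbeats 4000000 in
theorem dec15 : (S6.filter (PM' (X := Fin 6))).card = 15 := by decide
set_option maxHeartbeats 4000000 in
theorem dec7 : (S6.filter (fun M => PM' M ∧ matchingMap c0 M = M)).card = 7 := by decide
set_option maxHeartbeats 4000000 in
theorem dec8 : (S6.filter (fun M => PM' M ∧ matchingMap c0 M ≠ M)).card = 8 := by decide
theorem c0_sq : c0 * c0 = 1 := by decide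
theorem c0_ne : c0 ≠ 1 := by decide
theorem c0_free : ∀ x : Fin 6, c0 x ≠ x := by decide

theorem cycleType_fpf {α : Type*} [Fintype α] [DecidableEq α] (hα : Fintype.card α = 6)
    (g : Equiv.Perm α) (hg2 : g * g = 1) (hg1 : g ≠ 1) (hgfree : ∀ x, g x ≠ x) :
    g.cycleType = Multiset.replicate 3 2 := by
  have ho : orderOf g = 2 := by
    have : g ^ 2 = 1 := by rw [sq]; exact hg2
    exact orderOf_eq_prime this hg1
  have h2 : ∀ n ∈ g.cycleType, n = 2 := by
    intro n hn
    have hdvd : n ∣ 2 := by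
      rw [← ho, ← Equiv.Perm.lcm_cycleType]
      exact Multiset.dvd_lcm hn
    exact le_antisymm (Nat.le_of_dvd two_pos hdvd) (Equiv.Perm.two_le_of_mem_cycleType hn)
  have hsum : g.cycleType.sum = 6 := by
    rw [Equiv.Perm.sum_cycleType]
    have : g.support = Finset.univ := Finset.eq_univ_iff_forall.mpr fun x =>
      Equiv.Perm.mem_support.mpr (hgfree x)
    rw [this, Finset.card_univ, hα]
  have hrep : g.cycleType = Multiset.replicate (Multiset.card g.cycleType) 2 :=
    Multiset.eq_replicate_card.mpr h2
  have hcard : Multiset.card g.cycleType = 3 := by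
    have := hsum
    rw [hrep, Multiset.sum_replicate, smul_eq_mul] at this
    omega
  rw [hrep, hcard]

end FPFAux

open FPFAux in
/-- If `g` is a fixed-point-free involution of a 6-element set `X`, then exactly 7 of
the 15 perfect matchings of `X` are invariant under `g`, and the remaining 8 form
4 orbits of size 2. -/
theorem fixed_point_free_involution_on_matchings
    {X : Type*} [Fintype X] [DecidableEq X] (hX : Fintype.card X = 6)
    (g : Equiv.Perm X) (hg2 : g * g = 1) (hg1 : g ≠ 1) (hgfree : ∀ x : X, g x ≠ x) :
    Nat.card {M : Finset (Finset X) // IsPerfectMatching M} = 15 ∧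
    Nat.card {M : Finset (Finset X) //
      IsPerfectMatching M ∧ matchingMap g M = M} = 7 ∧
    Nat.card {M : Finset (Finset X) //
      IsPerfectMatching M ∧ matchingMap g M ≠ M} = 8 ∧
    Set.ncard {S : Set (Finset (Finset X)) | ∃ M,
      IsPerfectMatching M ∧ matchingMap g M ≠ M ∧ S = {M, matchingMap g M}} = 4 := by
  classical
  -- basic facts about g
  have hgg : ∀ x, g (g x) = x := by
    intro x
    have := congrArg (fun σ : Equiv.Perm X => σ x) hg2
    simpa [Equiv.Perm.mul_apply] using this
  -- transport g to Fin 6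
  have e : X ≃ Fin 6 := Fintype.equivFinOfCardEq hX
  set g1 : Equiv.Perm (Fin 6) := e.permCongr g with hg1def
  have hg1app : ∀ y, g1 y = e (g (e.symm y)) := fun y => Equiv.permCongr_apply e g y
  have hg1sq : g1 * g1 = 1 := by
    ext y
    simp [Equiv.Perm.mul_apply, hg1app, hgg]
  have hg1free : ∀ y, g1 y ≠ y := by
    intro y hy
    rw [hg1app] at hy
    have : g (e.symm y) = e.symm y := by
      have := congrArg e.symm hy
      simpa using this
    exact hgfree _ this
  have hg1ne : g1 ≠ 1 := by
    have : Nonempty (Fin 6) := ⟨0⟩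
    intro h
    exact hg1free 0 (by rw [h]; rfl)
  -- conjugate c0 to g1
  have hconj : IsConj c0 g1 := by
    rw [Equiv.Perm.isConj_iff_cycleType_eq]
    rw [cycleType_fpf (Fintype.card_fin 6) c0 c0_sq c0_ne c0_free,
      cycleType_fpf (Fintype.card_fin 6) g1 hg1sq hg1ne hg1free]
  obtain ⟨h, hh⟩ := isConj_iff.mp hconj
  -- the conjugating equivalence
  set f : X ≃ Fin 6 := e.trans h⁻¹ with hfdef
  have hfc : ∀ x, f (g x) = c0 (f x) := by
    intro x
    have h1 : g1 (e x) = h (c0 (h⁻¹ (e x))) := by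
      rw [← hh]
      simp [Equiv.Perm.mul_apply]
    have h2 : h⁻¹ (g1 (e x)) = c0 (h⁻¹ (e x)) := by
      rw [h1]; exact Equiv.symm_apply_apply h _
    have h3 : e (g x) = g1 (e x) := by rw [hg1app]; simp
    show h⁻¹ (e (g x)) = c0 (h⁻¹ (e x))
    rw [h3, h2]
  -- the transport equivalence on matchings
  have hinveq : ∀ M : Finset (Finset X), (matchingMap g M = M) ↔
      (matchingMap c0 (mEquiv f M) = mEquiv f M) := by
    intro M
    rw [mm_natural f g c0 hfc M]
    exact ⟨fun h' => by rw [h'], fun h' => (mEquiv f).injective h'⟩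
  have key1 : Nat.card {M : Finset (Finset X) // IsPerfectMatching M} = 15 := by
    have := Nat.card_congr ((mEquiv f).subtypeEquiv fun M => (pm_mEquiv_iff f M).symm)
    rw [this]
    have := Nat.card_congr (Equiv.subtypeEquivRight
      (fun M : Finset (Finset (Fin 6)) => pm_iff M))
    rw [this, count_eq _ (fun M hM => pm_mem_S6 ((pm_iff M).mpr hM)), dec15]
  have key2 : Nat.card {M : Finset (Finset X) //
      IsPerfectMatching M ∧ matchingMap g M = M} = 7 := by
    have := Nat.card_congr ((mEquiv f).subtypeEquiv
      (q := fun N => IsPerfectMatching N ∧ matchingMap c0 N = N) fun M =>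
      (and_congr (pm_mEquiv_iff f M).symm (hinveq M)))
    rw [this]
    have := Nat.card_congr (Equiv.subtypeEquivRight
      (p := fun M : Finset (Finset (Fin 6)) => IsPerfectMatching M ∧ matchingMap c0 M = M)
      (q := fun M : Finset (Finset (Fin 6)) => PM' M ∧ matchingMap c0 M = M)
      (fun M => and_congr (pm_iff M) Iff.rfl))
    rw [this, count_eq _ (fun M hM => pm_mem_S6 ((pm_iff M).mpr hM.1)), dec7]
  have key3 : Nat.card {M : Finset (Finset X) //
      IsPerfectMatching M ∧ matchingMap g M ≠ M} = 8 := by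
    have := Nat.card_congr ((mEquiv f).subtypeEquiv
      (q := fun N => IsPerfectMatching N ∧ matchingMap c0 N ≠ N) fun M =>
      (and_congr (pm_mEquiv_iff f M).symm (not_congr (hinveq M))))
    rw [this]
    have := Nat.card_congr (Equiv.subtypeEquivRight
      (p := fun M : Finset (Finset (Fin 6)) => IsPerfectMatching M ∧ matchingMap c0 M ≠ M)
      (q := fun M : Finset (Finset (Fin 6)) => PM' M ∧ matchingMap c0 M ≠ M)
      (fun M => and_congr (pm_iff M) Iff.rfl))
    rw [this, count_eq _ (fun M hM => pm_mem_S6 ((pm_iff M).mpr hM.1)), dec8]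
  refine ⟨key1, key2, key3, ?_⟩
  -- part 4 : orbits
  set P : Finset (Finset X) → Prop := fun M => IsPerfectMatching M ∧ matchingMap g M ≠ M
    with hPdef
  set T : Finset (Finset (Finset X)) := Finset.univ.filter P with hTdef
  have hT8 : T.card = 8 := by
    rw [← key3, Nat.card_eq_fintype_card, Fintype.card_subtype]
  set F : Finset (Finset X) → Set (Finset (Finset X)) :=
    fun M => {M, matchingMap g M} with hFdef
  have hPg : ∀ M, P M → P (matchingMap g M) := by
    rintro M ⟨hpm, hne⟩
    refine ⟨map_pm g hpm, ?_⟩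
    rw [mm_invol g hg2 M]
    exact fun h' => hne h'.symm
  have himg : {S : Set (Finset (Finset X)) | ∃ M,
      IsPerfectMatching M ∧ matchingMap g M ≠ M ∧ S = {M, matchingMap g M}}
      = ↑(T.image F) := by
    ext S
    simp only [Set.mem_setOf_eq, Finset.coe_image, Set.mem_image, Finset.mem_coe,
      hTdef, Finset.mem_filter, Finset.mem_univ, true_and]
    constructor
    · rintro ⟨M, h1, h2, rfl⟩; exact ⟨M, ⟨h1, h2⟩, rfl⟩
    · rintro ⟨M, ⟨h1, h2⟩, rfl⟩; exact ⟨M, h1, h2, rfl⟩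
  have hpair_mem : ∀ M, P M → ∀ N, F N = F M → N = M ∨ N = matchingMap g M := by
    intro M hM N hFN
    have : N ∈ (F M : Set (Finset (Finset X))) := by
      rw [← hFN]; exact Set.mem_insert N _
    simpa [hFdef] using this
  have hfiber : ∀ M ∈ T, T.filter (fun N => F N = F M)
      = ({M, matchingMap g M} : Finset (Finset (Finset X))) := by
    intro M hM
    rw [hTdef, Finset.mem_filter] at hM
    have hPM := hM.2
    ext N
    simp only [Finset.mem_filter, Finset.mem_insert, Finset.mem_singleton,
      hTdef, Finset.mem_univ, true_and]
    constructor
    · rintro ⟨hN, hFN⟩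
      exact hpair_mem M hPM N hFN
    · rintro (rfl | rfl)
      · exact ⟨hPM, rfl⟩
      · refine ⟨hPg M hPM, ?_⟩
        show ({matchingMap g M, matchingMap g (matchingMap g M)} : Set _) = _
        rw [mm_invol g hg2 M, Set.pair_comm]
  have hcard2 : ∀ M ∈ T, ({M, matchingMap g M} : Finset (Finset (Finset X))).card = 2 := by
    intro M hM
    rw [hTdef, Finset.mem_filter] at hM
    exact Finset.card_pair (fun h' => hM.2.2 h'.symm)
  have hsum : T.card = (T.image F).card * 2 := by
    rw [Finset.card_eq_sum_card_image F T]
    refine Finset.sum_const_nat ?_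
    intro S hS
    rw [Finset.mem_image] at hS
    obtain ⟨M, hM, rfl⟩ := hS
    rw [hfiber M hM]
    exact hcard2 M hM
  rw [himg, Set.ncard_coe_finset]
  omega
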